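/- Let (ψ_i)_{i ∈ Fin d} be an orthonormal family in ℂ^d (star(ψ_i) ⬝ᵥ ψ_j = 1 if i = j and 0 otherwise), set M_i := ψ_i·ψ_iᴴ (the rank-one outer product), let (C_i)_{i ∈ Fin d} be r×r complex matrices, and let W := ∑_i M_i ⊗ₖ C_i, a matrix indexed by Fin d × Fin r (⊗ₖ is the Kronecker product). Then for every family of ℂ-linear maps (P_i)_{i ∈ Fin d} on matrices indexed by Fin d × Fin r and every such matrix ρ: ∑_i P_i((M_i ⊗ₖ I_r)·W·ρ·Wᴴ·(M_i ⊗ₖ I_r)ᴴ) = ∑_i P_i((I_d ⊗ₖ C_i)·(M_i ⊗ₖ I_r)·ρ·(M_i ⊗ₖ I_r)ᴴ·(I_d ⊗ₖ C_i)ᴴ). -/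

import Mathlib

open Matrix Kronecker

lemma vecMulVec_mul_vecMulVec {d : ℕ} (u v x y : Fin d → ℂ) :
    vecMulVec u v * vecMulVec x y = (v ⬝ᵥ x) • vecMulVec u y := by
  ext a b
  simp only [mul_apply, vecMulVec_apply, Matrix.smul_apply, smul_eq_mul, dotProduct,
    Finset.sum_mul]
  exact Finset.sum_congr rfl fun k _ => by ring

set_option maxHeartbeats 1000000 in
theorem qif_if_interplay {d r : ℕ}
    (ψ : Fin d → (Fin d → ℂ))
    (horth : ∀ i j, star (ψ i) ⬝ᵥ ψ j = if i = j then 1 else 0)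
    (C : Fin d → Matrix (Fin r) (Fin r) ℂ)
    (P : Fin d → (Matrix (Fin d × Fin r) (Fin d × Fin r) ℂ →ₗ[ℂ]
                   Matrix (Fin d × Fin r) (Fin d × Fin r) ℂ))
    (ρ : Matrix (Fin d × Fin r) (Fin d × Fin r) ℂ) :
    let M : Fin d → Matrix (Fin d) (Fin d) ℂ := fun i => vecMulVec (ψ i) (star (ψ i))
    let W : Matrix (Fin d × Fin r) (Fin d × Fin r) ℂ := ∑ i, (M i) ⊗ₖ (C i)
    ∑ i, P i ((M i ⊗ₖ (1 : Matrix (Fin r) (Fin r) ℂ)) * W * ρ * Wᴴ *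
                (M i ⊗ₖ (1 : Matrix (Fin r) (Fin r) ℂ))ᴴ)
      = ∑ i, P i (((1 : Matrix (Fin d) (Fin d) ℂ) ⊗ₖ C i) *
                  (M i ⊗ₖ (1 : Matrix (Fin r) (Fin r) ℂ)) * ρ *
                  (M i ⊗ₖ (1 : Matrix (Fin r) (Fin r) ℂ))ᴴ *
                  ((1 : Matrix (Fin d) (Fin d) ℂ) ⊗ₖ C i)ᴴ) := by
  intro M W
  have hMM : ∀ i j, M i * M j = if i = j then M j else 0 := by
    intro i j
    rw [show M i * M j = (star (ψ i) ⬝ᵥ ψ j) • vecMulVec (ψ i) (star (ψ j)) from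
      vecMulVec_mul_vecMulVec _ _ _ _, horth]
    split
    · subst ‹i = j›; simp [M]
    · simp
  have hkey : ∀ i, (M i ⊗ₖ (1 : Matrix (Fin r) (Fin r) ℂ)) * W
      = ((1 : Matrix (Fin d) (Fin d) ℂ) ⊗ₖ C i) * (M i ⊗ₖ (1 : Matrix (Fin r) (Fin r) ℂ)) := by
    intro i
    have h1 : ((1 : Matrix (Fin d) (Fin d) ℂ) ⊗ₖ C i) *
        (M i ⊗ₖ (1 : Matrix (Fin r) (Fin r) ℂ)) = M i ⊗ₖ C i := by
      rw [← mul_kronecker_mul, one_mul, mul_one]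
    rw [h1, Finset.mul_sum]
    rw [Finset.sum_congr rfl (fun j _ => by
      rw [← mul_kronecker_mul, one_mul, hMM i j,
        apply_ite (fun X : Matrix (Fin d) (Fin d) ℂ => X ⊗ₖ C j), zero_kronecker])]
    simp
  refine Finset.sum_congr rfl (fun i _ => ?_)
  refine congrArg (P i) ?_
  calc (M i ⊗ₖ (1 : Matrix (Fin r) (Fin r) ℂ)) * W * ρ * Wᴴ *
        (M i ⊗ₖ (1 : Matrix (Fin r) (Fin r) ℂ))ᴴ
      = ((M i ⊗ₖ (1 : Matrix (Fin r) (Fin r) ℂ)) * W) * ρ *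
        ((M i ⊗ₖ (1 : Matrix (Fin r) (Fin r) ℂ)) * W)ᴴ := by
        rw [conjTranspose_mul, mul_assoc]
    _ = _ := by rw [hkey, conjTranspose_mul]; simp only [mul_assoc]
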